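/- Let λ, a, c ∈ ℝ and ω₀, ω₁, ω₂ ∈ ℝ. With F_ω(s,t) = λ²t + ω(λ(c+as) + aω) and φ(τ, v, ω₀) the solution of s' = ω₀, t' = λt + ω₀(c+as) starting at v, one has F_{ω₁}(φ(τ,v,ω₀)) − F_{ω₂}(φ(τ,v,ω₀)) = aω₀(ω₁−ω₂)λτ + F_{ω₁}(v) − F_{ω₂}(v) for all τ ∈ ℝ and v ∈ ℝ². -/

import Mathlib

/-- With F_ω(s,t) = λ²t + ω(λ(c+as) + aω) and φ the solution of
s' = ω₀, t' = λt + ω₀(c+as) starting at v: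
F_{ω₁}(φ(τ)) − F_{ω₂}(φ(τ)) = aω₀(ω₁−ω₂)λτ + F_{ω₁}(v) − F_{ω₂}(v). -/
theorem stmt7 (a c lam ω₀ ω₁ ω₂ : ℝ) (v : ℝ × ℝ)
    (φ : ℝ → ℝ × ℝ) (h0 : φ 0 = v)
    (hode : ∀ τ : ℝ,
      HasDerivAt φ (ω₀, lam * (φ τ).2 + ω₀ * (c + a * (φ τ).1)) τ)
    (F : ℝ → ℝ × ℝ → ℝ)
    (hF : ∀ ω : ℝ, ∀ p : ℝ × ℝ,
      F ω p = lam ^ 2 * p.2 + ω * (lam * (c + a * p.1) + a * ω)) :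
    ∀ τ : ℝ,
      F ω₁ (φ τ) - F ω₂ (φ τ) =
        a * ω₀ * (ω₁ - ω₂) * lam * τ + F ω₁ v - F ω₂ v := by
  have hs : ∀ τ : ℝ, (φ τ).1 = v.1 + ω₀ * τ := by
    have hd : ∀ τ : ℝ, HasDerivAt (fun τ => (φ τ).1 - ω₀ * τ) 0 τ := by
      intro τ
      have h1 : HasDerivAt (fun τ => (φ τ).1) ω₀ τ := (hode τ).fst
      have h2 : HasDerivAt (fun τ : ℝ => ω₀ * τ) ω₀ τ := by
        simpa using (hasDerivAt_id τ).const_mul ω₀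
      have h3 := h1.sub h2
      rw [sub_self] at h3
      exact h3
    have hc : ∀ τ : ℝ, (φ τ).1 - ω₀ * τ = (φ 0).1 - ω₀ * 0 := by
      intro τ
      exact is_const_of_deriv_eq_zero (fun x => (hd x).differentiableAt)
        (fun x => (hd x).deriv) τ 0
    intro τ
    have := hc τ
    rw [h0] at this
    linarith
  intro τ
  rw [hF, hF, hF, hF, hs τ]
  ring
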